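/- For any ε > 0 and any v, w ∈ ℝ^L, if ‖v − w‖ < ε then argmax^ε(v) ∩ argmax^ε(w) ≠ ∅. In particular, viewed as a map on the simplex Δ_{L−1}, the inflated argmax argmax^ε is ε-compatible. -/

import Mathlib

noncomputable section

/-- The set `R_j^ε = {w ∈ ℝ^L : w_j ≥ max_{ℓ≠j} w_ℓ + ε/√2}`. -/
def Rset (L : ℕ) (ε : ℝ) (j : Fin L) : Set (EuclideanSpace ℝ (Fin L)) :=
  {w | ∀ ℓ : Fin L, ℓ ≠ j → w ℓ + ε / Real.sqrt 2 ≤ w j}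

/-- The inflated argmax: `argmax^ε(w) = {j ∈ [L] : dist(w, R_j^ε) < ε}`. -/
def inflatedArgmax (L : ℕ) (ε : ℝ) (w : EuclideanSpace ℝ (Fin L)) : Set (Fin L) :=
  {j | Metric.infDist w (Rset L ε j) < ε}

open Finset

/-- Upper bound: an explicit witness level `lam` certifies `infDist x (Rset L ε j) < ε`. -/
private lemma infDist_lt_of_level (L : ℕ) (ε : ℝ) (hε : 0 < ε)
    (x : EuclideanSpace ℝ (Fin L)) (j : Fin L) (lam : ℝ)
    (h : (lam - x j) ^ 2
        + ∑ ℓ ∈ Finset.univ.erase j, (max (x ℓ + ε / Real.sqrt 2 - lam) 0) ^ 2 < ε ^ 2) :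
    Metric.infDist x (Rset L ε j) < ε := by
  classical
  set c : ℝ := ε / Real.sqrt 2 with hcdef
  set p : EuclideanSpace ℝ (Fin L) := WithLp.toLp 2 (fun ℓ => if ℓ = j then lam else min (x ℓ) (lam - c))
    with hpdef
  have hpj : p j = lam := by simp [hpdef]
  have hpℓ : ∀ ℓ : Fin L, ℓ ≠ j → p ℓ = min (x ℓ) (lam - c) := by
    intro ℓ hℓ; simp [hpdef, hℓ]
  have hmem : p ∈ Rset L ε j := by
    intro ℓ hℓ
    rw [hpj, hpℓ ℓ hℓ]
    have : min (x ℓ) (lam - c) ≤ lam - c := min_le_right _ _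
    have hc : ε / Real.sqrt 2 = c := rfl
    rw [hc]
    linarith
  have hsum : ∑ i, dist (x i) (p i) ^ 2
      = (lam - x j) ^ 2 + ∑ ℓ ∈ Finset.univ.erase j, (max (x ℓ + c - lam) 0) ^ 2 := by
    rw [← Finset.add_sum_erase _ _ (Finset.mem_univ j)]
    congr 1
    · rw [Real.dist_eq, sq_abs, hpj]; ring
    · refine Finset.sum_congr rfl ?_
      intro ℓ hℓ
      have hne : ℓ ≠ j := Finset.ne_of_mem_erase hℓ
      rw [Real.dist_eq, sq_abs, hpℓ ℓ hne]
      rcases le_total (x ℓ) (lam - c) with hle | hle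
      · rw [min_eq_left hle, max_eq_right (by linarith)]
        simp
      · rw [min_eq_right hle, max_eq_left (by linarith)]
        ring
  have hdist : dist x p < ε := by
    rw [EuclideanSpace.dist_eq, hsum]
    rw [Real.sqrt_lt' hε]
    exact h
  calc Metric.infDist x (Rset L ε j) ≤ dist x p := Metric.infDist_le_dist_of_mem hmem
    _ < ε := hdist

/-- Core inequality, asymmetric version with `0 ≤ κ`. -/
private lemma core_ineq (L : ℕ) (c κ : ℝ) (hc : 0 < c) (hκ : 0 ≤ κ)
    (vt wt : Fin L → ℝ)
    (Hv : c ^ 2 ≤ ∑ ℓ, (max (vt ℓ) 0) ^ 2)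
    (Hw : 2 * c ^ 2 - (c + κ) ^ 2 ≤ ∑ ℓ, (max (wt ℓ - κ) 0) ^ 2)
    (hD : ∀ ℓ, vt ℓ ≤ 0 ∨ wt ℓ ≤ 0) :
    2 * c ^ 2 ≤ ∑ ℓ, (vt ℓ - wt ℓ + κ) ^ 2 := by
  classical
  set P : Finset (Fin L) := Finset.univ.filter (fun ℓ => 0 < vt ℓ) with hPdef
  set Q : Finset (Fin L) := Finset.univ.filter (fun ℓ => 0 < wt ℓ) with hQdef
  have hPmem : ∀ ℓ, ℓ ∈ P ↔ 0 < vt ℓ := by intro ℓ; simp [hPdef]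
  have hQmem : ∀ ℓ, ℓ ∈ Q ↔ 0 < wt ℓ := by intro ℓ; simp [hQdef]
  have hPQ : Disjoint P Q := by
    rw [Finset.disjoint_left]
    intro ℓ hP hQ
    rcases hD ℓ with h | h
    · exact absurd ((hPmem ℓ).mp hP) (by linarith)
    · exact absurd ((hQmem ℓ).mp hQ) (by linarith)
  -- v-side
  have hSv : ∑ ℓ, (max (vt ℓ) 0) ^ 2 = ∑ ℓ ∈ P, vt ℓ ^ 2 := by
    rw [← Finset.sum_subset (Finset.subset_univ P)
      (fun ℓ _ hℓ => by
        have : ¬ 0 < vt ℓ := fun hlt => hℓ ((hPmem ℓ).mpr hlt)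
        rw [max_eq_right (by linarith)]; simp)]
    refine Finset.sum_congr rfl ?_
    intro ℓ hℓ
    rw [max_eq_left (le_of_lt ((hPmem ℓ).mp hℓ))]
  have hP1 : c ^ 2 ≤ ∑ ℓ ∈ P, vt ℓ ^ 2 := by rw [← hSv]; exact Hv
  have hPne : P.Nonempty := by
    by_contra hne
    rw [Finset.not_nonempty_iff_eq_empty] at hne
    rw [hne, Finset.sum_empty] at hP1
    nlinarith
  have hsnn : 0 ≤ ∑ ℓ ∈ P, vt ℓ :=
    Finset.sum_nonneg (fun ℓ hℓ => le_of_lt ((hPmem ℓ).mp hℓ))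
  have hs : c ≤ ∑ ℓ ∈ P, vt ℓ := by
    have h2 : ∑ ℓ ∈ P, vt ℓ ^ 2 ≤ (∑ ℓ ∈ P, vt ℓ) * (∑ ℓ ∈ P, vt ℓ) := by
      calc ∑ ℓ ∈ P, vt ℓ ^ 2 ≤ ∑ ℓ ∈ P, vt ℓ * (∑ m ∈ P, vt m) := by
            refine Finset.sum_le_sum ?_
            intro ℓ hℓ
            have hpos : 0 < vt ℓ := (hPmem ℓ).mp hℓ
            have hle : vt ℓ ≤ ∑ m ∈ P, vt m :=
              Finset.single_le_sum (fun m hm => le_of_lt ((hPmem m).mp hm)) hℓ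
            nlinarith
        _ = (∑ ℓ ∈ P, vt ℓ) * (∑ ℓ ∈ P, vt ℓ) := by rw [← Finset.sum_mul]
    nlinarith
  have hcard : (1 : ℝ) ≤ (P.card : ℝ) := by
    have : 1 ≤ P.card := Finset.card_pos.mpr hPne
    exact_mod_cast this
  have hPsum : (c + κ) ^ 2 ≤ ∑ ℓ ∈ P, (vt ℓ - wt ℓ + κ) ^ 2 := by
    have step1 : ∑ ℓ ∈ P, (vt ℓ + κ) ^ 2 ≤ ∑ ℓ ∈ P, (vt ℓ - wt ℓ + κ) ^ 2 := by
      refine Finset.sum_le_sum ?_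
      intro ℓ hℓ
      have h1 : 0 < vt ℓ := (hPmem ℓ).mp hℓ
      have h2 : wt ℓ ≤ 0 := (hD ℓ).resolve_left (by linarith)
      nlinarith
    have expand : ∑ ℓ ∈ P, (vt ℓ + κ) ^ 2
        = ∑ ℓ ∈ P, vt ℓ ^ 2 + 2 * κ * (∑ ℓ ∈ P, vt ℓ) + (P.card : ℝ) * κ ^ 2 := by
      have : ∀ ℓ ∈ P, (vt ℓ + κ) ^ 2 = vt ℓ ^ 2 + 2 * κ * vt ℓ + κ ^ 2 := by
        intro ℓ _; ring
      rw [Finset.sum_congr rfl this]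
      rw [Finset.sum_add_distrib, Finset.sum_add_distrib, ← Finset.mul_sum,
        Finset.sum_const, nsmul_eq_mul]
    have t1 : 2 * κ * c ≤ 2 * κ * (∑ ℓ ∈ P, vt ℓ) := by
      apply mul_le_mul_of_nonneg_left hs; linarith
    have t2 : 1 * κ ^ 2 ≤ (P.card : ℝ) * κ ^ 2 := by
      apply mul_le_mul_of_nonneg_right hcard (sq_nonneg κ)
    calc (c + κ) ^ 2 = c ^ 2 + 2 * κ * c + 1 * κ ^ 2 := by ring
      _ ≤ ∑ ℓ ∈ P, vt ℓ ^ 2 + 2 * κ * (∑ ℓ ∈ P, vt ℓ) + (P.card : ℝ) * κ ^ 2 := by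
          linarith [hP1, t1, t2]
      _ = ∑ ℓ ∈ P, (vt ℓ + κ) ^ 2 := expand.symm
      _ ≤ _ := step1
  have hQsum : 2 * c ^ 2 - (c + κ) ^ 2 ≤ ∑ ℓ ∈ Q, (vt ℓ - wt ℓ + κ) ^ 2 := by
    have e1 : ∑ ℓ, (max (wt ℓ - κ) 0) ^ 2 = ∑ ℓ ∈ Q, (max (wt ℓ - κ) 0) ^ 2 := by
      rw [← Finset.sum_subset (Finset.subset_univ Q)
        (fun ℓ _ hℓ => by
          have h0 : ¬ 0 < wt ℓ := fun hlt => hℓ ((hQmem ℓ).mpr hlt)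
          have : wt ℓ - κ ≤ 0 := by push_neg at h0; linarith
          rw [max_eq_right this]; simp)]
    have e2 : ∀ ℓ ∈ Q, (max (wt ℓ - κ) 0) ^ 2 ≤ (vt ℓ - wt ℓ + κ) ^ 2 := by
      intro ℓ hℓ
      have h1 : 0 < wt ℓ := (hQmem ℓ).mp hℓ
      have h2 : vt ℓ ≤ 0 := (hD ℓ).resolve_right (by linarith)
      rcases le_total (wt ℓ - κ) 0 with h | h
      · rw [max_eq_right h]; simpa using sq_nonneg (vt ℓ - wt ℓ + κ)
      · rw [max_eq_left h]; nlinarith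
    calc 2 * c ^ 2 - (c + κ) ^ 2 ≤ ∑ ℓ, (max (wt ℓ - κ) 0) ^ 2 := Hw
      _ = ∑ ℓ ∈ Q, (max (wt ℓ - κ) 0) ^ 2 := e1
      _ ≤ ∑ ℓ ∈ Q, (vt ℓ - wt ℓ + κ) ^ 2 := Finset.sum_le_sum e2
  have hsplit : ∑ ℓ ∈ P, (vt ℓ - wt ℓ + κ) ^ 2 + ∑ ℓ ∈ Q, (vt ℓ - wt ℓ + κ) ^ 2
      ≤ ∑ ℓ, (vt ℓ - wt ℓ + κ) ^ 2 := by
    rw [← Finset.sum_union hPQ]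
    exact Finset.sum_le_sum_of_subset_of_nonneg (Finset.subset_univ _)
      (fun ℓ _ _ => sq_nonneg _)
  linarith

/-- Symmetric main inequality. -/
private lemma main_ineq (L : ℕ) (c : ℝ) (hc : 0 < c) (v w : Fin L → ℝ) (js ks : Fin L)
    (Hv : ∀ lam : ℝ, 2 * c ^ 2 ≤ (lam - v js) ^ 2
        + ∑ ℓ ∈ Finset.univ.erase js, (max (v ℓ + c - lam) 0) ^ 2)
    (Hw : ∀ lam : ℝ, 2 * c ^ 2 ≤ (lam - w ks) ^ 2
        + ∑ ℓ ∈ Finset.univ.erase ks, (max (w ℓ + c - lam) 0) ^ 2)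
    (hD : ∀ ℓ, v ℓ ≤ v js ∨ w ℓ ≤ w ks) :
    2 * c ^ 2 ≤ ∑ ℓ, (v ℓ - w ℓ) ^ 2 := by
  classical
  set κ : ℝ := v js - w ks with hκdef
  -- Hv at the "top" level
  have HvC : c ^ 2 ≤ ∑ ℓ, (max (v ℓ - v js) 0) ^ 2 := by
    have h := Hv (v js + c)
    have e0 : ∀ ℓ : Fin L, v ℓ + c - (v js + c) = v ℓ - v js := by intro ℓ; ring
    have e1 : ∑ ℓ ∈ Finset.univ.erase js, (max (v ℓ + c - (v js + c)) 0) ^ 2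
        = ∑ ℓ ∈ Finset.univ.erase js, (max (v ℓ - v js) 0) ^ 2 :=
      Finset.sum_congr rfl (fun ℓ _ => by rw [e0])
    have e2 : ∑ ℓ ∈ Finset.univ.erase js, (max (v ℓ - v js) 0) ^ 2
        = ∑ ℓ, (max (v ℓ - v js) 0) ^ 2 := by
      refine Finset.sum_erase _ ?_
      simp
    rw [e1, e2] at h
    nlinarith
  have HwC : c ^ 2 ≤ ∑ ℓ, (max (w ℓ - w ks) 0) ^ 2 := by
    have h := Hw (w ks + c)
    have e1 : ∑ ℓ ∈ Finset.univ.erase ks, (max (w ℓ + c - (w ks + c)) 0) ^ 2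
        = ∑ ℓ ∈ Finset.univ.erase ks, (max (w ℓ - w ks) 0) ^ 2 :=
      Finset.sum_congr rfl (fun ℓ _ => by norm_num)
    have e2 : ∑ ℓ ∈ Finset.univ.erase ks, (max (w ℓ - w ks) 0) ^ 2
        = ∑ ℓ, (max (w ℓ - w ks) 0) ^ 2 := by
      refine Finset.sum_erase _ ?_
      simp
    rw [e1, e2] at h
    nlinarith
  rcases le_total 0 κ with hκ | hκ
  · -- κ ≥ 0 : use core with (vt, wt) = (v - v js, w - w ks)
    have HwK : 2 * c ^ 2 - (c + κ) ^ 2 ≤ ∑ ℓ, (max ((w ℓ - w ks) - κ) 0) ^ 2 := by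
      have h := Hw (w ks + c + κ)
      have e1 : ∑ ℓ ∈ Finset.univ.erase ks, (max (w ℓ + c - (w ks + c + κ)) 0) ^ 2
          = ∑ ℓ ∈ Finset.univ.erase ks, (max ((w ℓ - w ks) - κ) 0) ^ 2 :=
        Finset.sum_congr rfl (fun ℓ _ => by ring_nf)
      have e2 : ∑ ℓ ∈ Finset.univ.erase ks, (max ((w ℓ - w ks) - κ) 0) ^ 2
          = ∑ ℓ, (max ((w ℓ - w ks) - κ) 0) ^ 2 := by
        refine Finset.sum_erase _ ?_
        rw [max_eq_right (by simp; linarith)]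
        simp
      rw [e1, e2] at h
      have e3 : (w ks + c + κ - w ks) ^ 2 = (c + κ) ^ 2 := by ring
      rw [e3] at h
      linarith
    have hD' : ∀ ℓ, (v ℓ - v js) ≤ 0 ∨ (w ℓ - w ks) ≤ 0 := by
      intro ℓ
      rcases hD ℓ with h | h
      · left; linarith
      · right; linarith
    have hcore := core_ineq L c κ hc hκ (fun ℓ => v ℓ - v js) (fun ℓ => w ℓ - w ks)
      HvC HwK hD'
    have efin : ∑ ℓ, ((v ℓ - v js) - (w ℓ - w ks) + κ) ^ 2 = ∑ ℓ, (v ℓ - w ℓ) ^ 2 :=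
      Finset.sum_congr rfl (fun ℓ _ => by rw [hκdef]; ring)
    rw [efin] at hcore
    exact hcore
  · -- κ ≤ 0 : swap roles
    have hκ' : 0 ≤ -κ := by linarith
    have HvK : 2 * c ^ 2 - (c + -κ) ^ 2 ≤ ∑ ℓ, (max ((v ℓ - v js) - -κ) 0) ^ 2 := by
      have h := Hv (v js + c + -κ)
      have e1 : ∑ ℓ ∈ Finset.univ.erase js, (max (v ℓ + c - (v js + c + -κ)) 0) ^ 2
          = ∑ ℓ ∈ Finset.univ.erase js, (max ((v ℓ - v js) - -κ) 0) ^ 2 :=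
        Finset.sum_congr rfl (fun ℓ _ => by ring_nf)
      have e2 : ∑ ℓ ∈ Finset.univ.erase js, (max ((v ℓ - v js) - -κ) 0) ^ 2
          = ∑ ℓ, (max ((v ℓ - v js) - -κ) 0) ^ 2 := by
        refine Finset.sum_erase _ ?_
        rw [max_eq_right (by simp; linarith)]
        simp
      rw [e1, e2] at h
      have e3 : (v js + c + -κ - v js) ^ 2 = (c + -κ) ^ 2 := by ring
      rw [e3] at h
      linarith
    have hD' : ∀ ℓ, (w ℓ - w ks) ≤ 0 ∨ (v ℓ - v js) ≤ 0 := by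
      intro ℓ
      rcases hD ℓ with h | h
      · right; linarith
      · left; linarith
    have hcore := core_ineq L c (-κ) hc hκ' (fun ℓ => w ℓ - w ks) (fun ℓ => v ℓ - v js)
      HwC HvK hD'
    have efin : ∑ ℓ, ((w ℓ - w ks) - (v ℓ - v js) + -κ) ^ 2 = ∑ ℓ, (v ℓ - w ℓ) ^ 2 :=
      Finset.sum_congr rfl (fun ℓ _ => by rw [hκdef]; ring)
    rw [efin] at hcore
    exact hcore

/-- For any `ε > 0` and `v, w ∈ ℝ^L`, if `‖v − w‖ < ε` then
`argmax^ε(v) ∩ argmax^ε(w) ≠ ∅`; i.e., the inflated argmax is `ε`-compatible. -/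
theorem inflatedArgmax_compatible (L : ℕ) (hL : 2 ≤ L) (ε : ℝ) (hε : 0 < ε)
    (v w : EuclideanSpace ℝ (Fin L)) (h : dist v w < ε) :
    (inflatedArgmax L ε v ∩ inflatedArgmax L ε w).Nonempty := by
  classical
  by_contra hcon
  rw [Set.not_nonempty_iff_eq_empty] at hcon
  have hcon' : ∀ j : Fin L,
      ¬ (Metric.infDist v (Rset L ε j) < ε ∧ Metric.infDist w (Rset L ε j) < ε) := by
    intro j hj
    have : j ∈ inflatedArgmax L ε v ∩ inflatedArgmax L ε w := ⟨hj.1, hj.2⟩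
    rw [hcon] at this
    exact this
  set c : ℝ := ε / Real.sqrt 2 with hcdef
  have hsqrt2 : (0:ℝ) < Real.sqrt 2 := Real.sqrt_pos.mpr (by norm_num)
  have hc : 0 < c := div_pos hε hsqrt2
  have hc2 : 2 * c ^ 2 = ε ^ 2 := by
    rw [hcdef, div_pow, Real.sq_sqrt (by norm_num : (0:ℝ) ≤ 2)]
    field_simp
  -- goodness predicate
  set good : EuclideanSpace ℝ (Fin L) → Fin L → Prop := fun x j =>
    ∃ lam : ℝ, (lam - x j) ^ 2
      + ∑ ℓ ∈ Finset.univ.erase j, (max (x ℓ + c - lam) 0) ^ 2 < ε ^ 2 with hgooddef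
  have hUP : ∀ (x : EuclideanSpace ℝ (Fin L)) (j : Fin L), good x j →
      Metric.infDist x (Rset L ε j) < ε := by
    intro x j hgx
    obtain ⟨lam, hlam⟩ := hgx
    exact infDist_lt_of_level L ε hε x j lam hlam
  have hdisj : ∀ j : Fin L, ¬ good v j ∨ ¬ good w j := by
    intro j
    by_contra hcontra
    push_neg at hcontra
    exact hcon' j ⟨hUP v j hcontra.1, hUP w j hcontra.2⟩
  have hgood_argmax : ∀ (x : EuclideanSpace ℝ (Fin L)) (j : Fin L),
      (∀ ℓ, x ℓ ≤ x j) → good x j := by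
    intro x j hj
    refine ⟨x j + c, ?_⟩
    have e1 : ∑ ℓ ∈ Finset.univ.erase j, (max (x ℓ + c - (x j + c)) 0) ^ 2 = 0 := by
      refine Finset.sum_eq_zero ?_
      intro ℓ _
      rw [max_eq_right (by have := hj ℓ; linarith)]
      simp
    rw [e1]
    have : (x j + c - x j) ^ 2 = c ^ 2 := by ring
    rw [this]
    nlinarith
  have hLpos : 0 < L := by omega
  have huniv : (Finset.univ : Finset (Fin L)).Nonempty := by
    exact ⟨⟨0, hLpos⟩, Finset.mem_univ _⟩
  set A : Finset (Fin L) := Finset.univ.filter (fun j => ¬ good v j) with hAdef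
  set B : Finset (Fin L) := Finset.univ.filter (fun j => ¬ good w j) with hBdef
  -- A nonempty via argmax of w
  obtain ⟨k₀, _, hk₀⟩ := Finset.exists_max_image (Finset.univ : Finset (Fin L)) w huniv
  have hk₀good : good w k₀ := hgood_argmax w k₀ (fun ℓ => hk₀ ℓ (Finset.mem_univ ℓ))
  have hk₀A : k₀ ∈ A := by
    rw [hAdef, Finset.mem_filter]
    exact ⟨Finset.mem_univ _, (hdisj k₀).resolve_right (not_not_intro hk₀good)⟩
  obtain ⟨j₀, _, hj₀⟩ := Finset.exists_max_image (Finset.univ : Finset (Fin L)) v huniv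
  have hj₀good : good v j₀ := hgood_argmax v j₀ (fun ℓ => hj₀ ℓ (Finset.mem_univ ℓ))
  have hj₀B : j₀ ∈ B := by
    rw [hBdef, Finset.mem_filter]
    exact ⟨Finset.mem_univ _, (hdisj j₀).resolve_left (not_not_intro hj₀good)⟩
  obtain ⟨js, hjsA, hjs⟩ := Finset.exists_max_image A v ⟨k₀, hk₀A⟩
  obtain ⟨ks, hksB, hks⟩ := Finset.exists_max_image B w ⟨j₀, hj₀B⟩
  have hjsbad : ¬ good v js := by
    have h1 := hjsA
    rw [hAdef] at h1
    exact (Finset.mem_filter.mp h1).2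
  have Hv : ∀ lam : ℝ, 2 * c ^ 2 ≤ (lam - v js) ^ 2
      + ∑ ℓ ∈ Finset.univ.erase js, (max (v ℓ + c - lam) 0) ^ 2 := by
    intro lam
    by_contra hlt
    push_neg at hlt
    refine hjsbad ⟨lam, ?_⟩
    rw [← hc2]
    exact hlt
  have hksbad : ¬ good w ks := by
    have h1 := hksB
    rw [hBdef] at h1
    exact (Finset.mem_filter.mp h1).2
  have Hw : ∀ lam : ℝ, 2 * c ^ 2 ≤ (lam - w ks) ^ 2
      + ∑ ℓ ∈ Finset.univ.erase ks, (max (w ℓ + c - lam) 0) ^ 2 := by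
    intro lam
    by_contra hlt
    push_neg at hlt
    refine hksbad ⟨lam, ?_⟩
    rw [← hc2]
    exact hlt
  have hD : ∀ ℓ : Fin L, v ℓ ≤ v js ∨ w ℓ ≤ w ks := by
    intro ℓ
    rcases hdisj ℓ with hbad | hbad
    · left
      exact hjs ℓ (by rw [hAdef, Finset.mem_filter]; exact ⟨Finset.mem_univ _, hbad⟩)
    · right
      exact hks ℓ (by rw [hBdef, Finset.mem_filter]; exact ⟨Finset.mem_univ _, hbad⟩)
  have hcore := main_ineq L c hc (fun ℓ => v ℓ) (fun ℓ => w ℓ) js ks Hv Hw hD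
  have hdist2 : dist v w ^ 2 = ∑ ℓ, (v ℓ - w ℓ) ^ 2 := by
    rw [EuclideanSpace.dist_eq, Real.sq_sqrt (by positivity)]
    exact Finset.sum_congr rfl (fun ℓ _ => by rw [Real.dist_eq, sq_abs])
  have hlt : dist v w ^ 2 < ε ^ 2 := by
    have h0 : (0:ℝ) ≤ dist v w := dist_nonneg
    nlinarith
  rw [hdist2] at hlt
  rw [hc2] at hcore
  linarith

end
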